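/- In the symmetric group S_r, for A = (a_{i,j}) ∈ M_n(ℕ) with |A| = r, the permutation d_A defined by d_A(ã_{h-1,k} + p) = ã^r_{h,k-1} + p for all h, k with a_{h,k} > 0 and p ∈ [1, a_{h,k}] — where ã_{i,j} = Σ_{p=1}^{j-1} Σ_{u=1}^n a_{u,p} + Σ_{u=1}^i a_{u,j} is the column-reading partial sum and ã^r_{i,j} is the analogous row-reading partial sum — is a well-defined bijection of [1, r]. -/

import Mathlib

open Finset

/-- Column-reading partial sum ã_{h-1,k} (0-based): all entries in columns < k,
plus entries in rows < h of column k. -/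
def ctil {n : ℕ} (A : Fin n → Fin n → ℕ) (h k : Fin n) : ℕ :=
  (∑ j ∈ Finset.univ.filter (· < k), ∑ u, A u j)
    + ∑ u ∈ Finset.univ.filter (· < h), A u k

/-- Row-reading partial sum ã^r_{h,k-1} (0-based): all entries in rows < h,
plus entries in columns < k of row h. -/
def rtil {n : ℕ} (A : Fin n → Fin n → ℕ) (h k : Fin n) : ℕ :=
  (∑ i ∈ Finset.univ.filter (· < h), ∑ u, A i u)
    + ∑ j ∈ Finset.univ.filter (· < k), A h j

lemma rtil_eq {n : ℕ} (A : Fin n → Fin n → ℕ) (h k : Fin n) :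
    rtil A h k = ctil (fun i j => A j i) k h := rfl

lemma partial_add_le {m : ℕ} (w : Fin m → ℕ) (h : Fin m) :
    (∑ u ∈ univ.filter (· < h), w u) + w h ≤ ∑ u, w u := by
  rw [add_comm, ← Finset.sum_insert (by simp)]
  exact Finset.sum_le_sum_of_subset (fun x _ => mem_univ x)

lemma partial_add_le_partial {m : ℕ} (w : Fin m → ℕ) {h h' : Fin m} (hh : h < h') :
    (∑ u ∈ univ.filter (· < h), w u) + w h ≤ ∑ u ∈ univ.filter (· < h'), w u := by
  rw [add_comm, ← Finset.sum_insert (by simp)]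
  apply Finset.sum_le_sum_of_subset
  intro x hx
  simp only [mem_insert, mem_filter, mem_univ, true_and] at *
  rcases hx with rfl | hx
  · exact hh
  · exact hx.trans hh

lemma ctil_key {n : ℕ} (A : Fin n → Fin n → ℕ) {h k h' k' : Fin n}
    (hlt : k < k' ∨ (k = k' ∧ h < h')) :
    ctil A h k + A h k ≤ ctil A h' k' := by
  unfold ctil
  rcases hlt with hk | ⟨rfl, hh⟩
  · calc (∑ j ∈ univ.filter (· < k), ∑ u, A u j) + (∑ u ∈ univ.filter (· < h), A u k) + A h k
        ≤ (∑ j ∈ univ.filter (· < k), ∑ u, A u j) + ∑ u, A u k := by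
          rw [add_assoc]; exact Nat.add_le_add_left (partial_add_le _ h) _
      _ ≤ ∑ j ∈ univ.filter (· < k'), ∑ u, A u j :=
          partial_add_le_partial (fun j => ∑ u, A u j) hk
      _ ≤ _ := Nat.le_add_right _ _
  · rw [add_assoc]
    exact Nat.add_le_add_left (partial_add_le_partial _ hh) _

lemma ctil_bound {n : ℕ} (A : Fin n → Fin n → ℕ) (h k : Fin n) :
    ctil A h k + A h k ≤ ∑ j, ∑ u, A u j := by
  unfold ctil
  calc (∑ j ∈ univ.filter (· < k), ∑ u, A u j) + (∑ u ∈ univ.filter (· < h), A u k) + A h k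
      ≤ (∑ j ∈ univ.filter (· < k), ∑ u, A u j) + ∑ u, A u k := by
        rw [add_assoc]; exact Nat.add_le_add_left (partial_add_le _ h) _
    _ ≤ ∑ j, ∑ u, A u j := partial_add_le (fun j => ∑ u, A u j) k

lemma ctil_inj {n : ℕ} (A : Fin n → Fin n → ℕ) {h k h' k' : Fin n} {p p' : ℕ}
    (hp : p < A h k) (hp' : p' < A h' k')
    (heq : ctil A h k + p = ctil A h' k' + p') :
    h = h' ∧ k = k' ∧ p = p' := by
  rcases lt_trichotomy k k' with hk | rfl | hk
  · have := ctil_key A (h := h) (h' := h') (Or.inl hk); omega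
  · rcases lt_trichotomy h h' with hh | rfl | hh
    · have := ctil_key A (k := k) (k' := k) (h := h) (h' := h') (Or.inr ⟨rfl, hh⟩); omega
    · exact ⟨rfl, rfl, by omega⟩
    · have := ctil_key A (k := k) (k' := k) (h := h') (h' := h) (Or.inr ⟨rfl, hh⟩); omega
  · have := ctil_key A (h := h') (h' := h) (Or.inl hk); omega

/-- The assignment d_A(ã_{h-1,k} + p) = ã^r_{h,k-1} + p (for p ranging over the
entry a_{h,k}) is a well-defined bijection of [1,r]: there is a unique
permutation of ℕ, fixing everything ≥ r, realizing it. -/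
theorem stmt18 (n r : ℕ) (A : Fin n → Fin n → ℕ) (hr : ∑ i, ∑ j, A i j = r) :
    ∃! σ : Equiv.Perm ℕ,
      (∀ x, r ≤ x → σ x = x) ∧
      (∀ (h k : Fin n) (p : ℕ), p < A h k → σ (ctil A h k + p) = rtil A h k + p) := by
  have hr' : ∑ j, ∑ u, A u j = r := by rw [← hr]; exact Finset.sum_comm
  have hcard : Fintype.card (Σ h : Fin n, Σ k : Fin n, Fin (A h k)) = r := by
    simp [Fintype.card_sigma, hr]
  -- the two index maps into Fin r
  have hfcb : ∀ s : (Σ h : Fin n, Σ k : Fin n, Fin (A h k)),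
      ctil A s.1 s.2.1 + (s.2.2 : ℕ) < r := by
    rintro ⟨h, k, p⟩
    show ctil A h k + (p : ℕ) < r
    have := ctil_bound A h k
    have hp := p.isLt
    rw [hr'] at this
    omega
  have hfrb : ∀ s : (Σ h : Fin n, Σ k : Fin n, Fin (A h k)),
      rtil A s.1 s.2.1 + (s.2.2 : ℕ) < r := by
    rintro ⟨h, k, p⟩
    show rtil A h k + (p : ℕ) < r
    have := ctil_bound (fun i j => A j i) k h
    have hp := p.isLt
    rw [hr] at this
    rw [rtil_eq]
    omega
  set fc : (Σ h : Fin n, Σ k : Fin n, Fin (A h k)) → Fin r :=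
    fun s => ⟨ctil A s.1 s.2.1 + (s.2.2 : ℕ), hfcb s⟩ with hfc_def
  set fr : (Σ h : Fin n, Σ k : Fin n, Fin (A h k)) → Fin r :=
    fun s => ⟨rtil A s.1 s.2.1 + (s.2.2 : ℕ), hfrb s⟩ with hfr_def
  have hfc_inj : Function.Injective fc := by
    rintro ⟨h, k, p⟩ ⟨h', k', p'⟩ hEq
    have hv : ctil A h k + (p : ℕ) = ctil A h' k' + (p' : ℕ) :=
      congrArg Fin.val hEq
    obtain ⟨rfl, rfl, hpp⟩ := ctil_inj A p.isLt p'.isLt hv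
    obtain rfl : p = p' := Fin.ext hpp
    rfl
  have hfr_inj : Function.Injective fr := by
    rintro ⟨h, k, p⟩ ⟨h', k', p'⟩ hEq
    have hv : ctil (fun i j => A j i) k h + (p : ℕ)
        = ctil (fun i j => A j i) k' h' + (p' : ℕ) := by
      have := congrArg Fin.val hEq
      exact this
    obtain ⟨rfl, rfl, hpp⟩ := ctil_inj (fun i j => A j i) p.isLt p'.isLt hv
    obtain rfl : p = p' := Fin.ext hpp
    rfl
  have hfc_bij : Function.Bijective fc :=
    (Fintype.bijective_iff_injective_and_card fc).2 ⟨hfc_inj, by simp [hcard]⟩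
  have hfr_bij : Function.Bijective fr :=
    (Fintype.bijective_iff_injective_and_card fr).2 ⟨hfr_inj, by simp [hcard]⟩
  set ec := Equiv.ofBijective fc hfc_bij with hec
  set er := Equiv.ofBijective fr hfr_bij with her
  set π : Equiv.Perm (Fin r) := ec.symm.trans er with hπ
  set f : Fin r ≃ {x : ℕ // x < r} := Fin.equivSubtype with hf
  set σ : Equiv.Perm ℕ := π.extendDomain f with hσ
  have hfix : ∀ x, r ≤ x → σ x = x := fun x hx =>
    π.extendDomain_apply_not_subtype f (by simpa using not_lt.2 hx)
  have hmap : ∀ (h k : Fin n) (p : ℕ), p < A h k →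
      σ (ctil A h k + p) = rtil A h k + p := by
    intro h k p hp
    set s : (Σ h : Fin n, Σ k : Fin n, Fin (A h k)) := ⟨h, k, ⟨p, hp⟩⟩ with hs
    have hlt : ctil A h k + p < r := hfcb s
    have h1 : σ (ctil A h k + p) = (f (π (f.symm ⟨ctil A h k + p, hlt⟩)) : ℕ) :=
      π.extendDomain_apply_subtype f hlt
    have h2 : f.symm ⟨ctil A h k + p, hlt⟩ = fc s := rfl
    have h3 : π (fc s) = fr s := by
      rw [hπ]
      simp only [Equiv.trans_apply]
      have : ec.symm (fc s) = s := ec.symm_apply_apply s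
      rw [this]
      rfl
    rw [h1, h2, h3]
    rfl
  refine ⟨σ, ⟨hfix, hmap⟩, ?_⟩
  rintro σ' ⟨hfix', hmap'⟩
  ext x
  by_cases hx : x < r
  · obtain ⟨s, hsx⟩ := hfc_bij.2 ⟨x, hx⟩
    obtain ⟨h, k, p⟩ := s
    have hxval : x = ctil A h k + (p : ℕ) := (congrArg Fin.val hsx).symm
    rw [hxval, hmap' h k p p.isLt, hmap h k p p.isLt]
  · rw [hfix' x (not_lt.1 hx), hfix x (not_lt.1 hx)]
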